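/- For every real t ≥ 2, log((t+3/2)/(t+1/2)) < 1/(t+1) + 0.26/((t+1)(t+2)(t+3)). -/
import Mathlib

theorem stmt_17 (t : ℝ) (ht : 2 ≤ t) :
    Real.log ((t + 3 / 2) / (t + 1 / 2))
      < 1 / (t + 1) + 0.26 / ((t + 1) * (t + 2) * (t + 3)) := by
  have h1 : (0:ℝ) < t + 1 := by linarith
  have h2 : (0:ℝ) < t + 2 := by linarith
  have h3 : (0:ℝ) < t + 3 := by linarith
  have hd : (0:ℝ) < t + 1 / 2 := by linarith
  have hx : (0:ℝ) < (t + 3 / 2) / (t + 1 / 2) := by positivity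
  set y : ℝ := 1 / (t + 1) + 0.26 / ((t + 1) * (t + 2) * (t + 3)) with hy
  have hy0 : 0 ≤ y := by positivity
  rw [Real.log_lt_iff_lt_exp hx]
  have hsum := Real.sum_le_exp_of_nonneg hy0 4
  refine lt_of_lt_of_le ?_ hsum
  have hsum4 : ∑ i ∈ Finset.range 4, y ^ i / (Nat.factorial i) = 1 + y + y ^ 2 / 2 + y ^ 3 / 6 := by
    norm_num [Finset.sum_range_succ, Nat.factorial]
  rw [hsum4]
  set P : ℝ := (t + 1) * (t + 2) * (t + 3) with hP
  set N : ℝ := (t + 2) * (t + 3) + 0.26 with hN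
  have hPpos : (0:ℝ) < P := by rw [hP]; positivity
  have hht : 0 ≤ t - 2 := by linarith
  have key : 6 * P ^ 3 < (t + 1 / 2) * (6 * N * P ^ 2 + 3 * N ^ 2 * P + N ^ 3) := by
    rw [hP, hN]
    nlinarith [hht, pow_nonneg hht 2, pow_nonneg hht 3, pow_nonneg hht 4,
      pow_nonneg hht 5, pow_nonneg hht 6, pow_nonneg hht 7]
  have heq : y + y ^ 2 / 2 + y ^ 3 / 6 = (6 * N * P ^ 2 + 3 * N ^ 2 * P + N ^ 3) / (6 * P ^ 3) := by
    rw [hy, hP, hN]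
    field_simp
    ring
  have h6 : 1 < (t + 1 / 2) * (y + y ^ 2 / 2 + y ^ 3 / 6) := by
    rw [heq, ← mul_div_assoc, lt_div_iff₀ (by positivity)]
    linarith [key]
  rw [div_lt_iff₀ hd]
  nlinarith [h6]
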